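/- arXiv:1710.08794 — 3 statements merged into one kernel-verified Lean document; each statement's English description precedes it below -/
import Mathlib

section
/- Let n ≥ 1, let ω belong to the class L¹_G(ℝ₊) for n with Mω(j) > 0 for j = 1,…,n, and suppose p(a) = C_n[ω]·Δ_n(a)·det[((−x·d/dx)^{b−1}ω)(a_c)]_{b,c=1,…,n} is a probability density on (0,∞)^n, where C_n[ω] is the normalization constant. Then C_n[ω] = ∏_{j=1}^n 1/(j!·Mω(j)), and for every s ∈ ℝ^n with pairwise distinct entries such that s_c − (n−1)/2 ∈ [1,n] for all c: (∏_{j=0}^{n−1} j!) · ∫_{(0,∞)^n} p(a) · det[ a_b^{s_c − (n+1)/2} ]_{b,c=1,…,n} / ( Δ_n(s) · Δ_n(a) ) da = ∏_{j=1}^n Mω( s_j − (n−1)/2 )/Mω(j), where Mω(s) = ∫₀^∞ ω(x)·x^{s−1} dx is the Mellin transform. -/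
open MeasureTheory Finset

/-- The Vandermonde determinant `Δ_m(a) = ∏_{1 ≤ b < c ≤ m} (a_c − a_b)`. -/
noncomputable def vdm {m : ℕ} (a : Fin m → ℝ) : ℝ :=
  ∏ p ∈ Finset.univ.filter (fun p : Fin m × Fin m => p.1 < p.2), (a p.2 - a p.1)

/-- The operator `f ↦ (x ↦ x·f′(x))`. -/
noncomputable def xdop (f : ℝ → ℝ) : ℝ → ℝ := fun x => x * deriv f x

/-- The Mellin transform `Mω(s) = ∫₀^∞ ω(x)·x^{s−1} dx`. -/
noncomputable def Mell (w : ℝ → ℝ) (s : ℝ) : ℝ := ∫ x in Set.Ioi (0:ℝ), w x * x ^ (s - 1)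

section Helpers

open Set Filter


/-- If `h x / x` is integrable on `(1,∞)` and `h` tends to `L` at `∞`, then `L = 0`. -/
lemma limit_zero_atTop {h : ℝ → ℝ} {L : ℝ}
    (hi : IntegrableOn (fun x => h x / x) (Set.Ioi 1))
    (ht : Tendsto h atTop (nhds L)) : L = 0 := by
  by_contra hL
  have h2 : |L| / 2 < |L| := by have := abs_pos.2 hL; linarith
  obtain ⟨A, hA⟩ := (ht.abs.eventually (eventually_ge_nhds h2)).exists_forall_of_atTop
  set B := max A 2 with hB
  have hB1 : (1:ℝ) < B := lt_of_lt_of_le one_lt_two (le_max_right _ _)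
  have key : IntegrableOn (fun x : ℝ => |L| / 2 * x⁻¹) (Set.Ioi B) := by
    refine Integrable.mono' (hi.mono_set (Set.Ioi_subset_Ioi hB1.le)).abs ?_ ?_
    · exact (measurable_const.mul measurable_inv).aestronglyMeasurable
    · filter_upwards [ae_restrict_mem measurableSet_Ioi] with x hx
      have hx1 : (1:ℝ) < x := hB1.trans hx
      have hx0 : (0:ℝ) < x := lt_trans one_pos hx1
      have : |L| / 2 ≤ |h x| := hA x (le_of_lt (lt_of_le_of_lt (le_max_left _ _) hx))
      rw [Real.norm_eq_abs, abs_of_nonneg (by positivity)]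
      calc |L| / 2 * x⁻¹ ≤ |h x| * x⁻¹ := by
            apply mul_le_mul_of_nonneg_right this (by positivity)
        _ ≤ |h x / x| := by rw [abs_div, div_eq_mul_inv, abs_of_pos hx0]
        _ ≤ |(fun x => h x / x) x| := le_refl _
  have hinv : IntegrableOn (fun x : ℝ => x⁻¹) (Set.Ioi B) := by
    have hL2 : |L| / 2 ≠ 0 := by positivity
    have heq : (fun x : ℝ => x⁻¹) = fun x => (|L| / 2)⁻¹ * (|L| / 2 * x⁻¹) := by
      funext x; rw [← mul_assoc, inv_mul_cancel₀ hL2, one_mul]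
    rw [heq]; exact key.const_mul _
  have : IntegrableOn (fun x : ℝ => x ^ (-1 : ℝ)) (Set.Ioi B) := by
    refine (integrableOn_congr_fun (fun x hx => ?_) measurableSet_Ioi).2 hinv
    rw [Real.rpow_neg_one]
  rw [integrableOn_Ioi_rpow_iff (lt_trans one_pos hB1)] at this
  exact absurd this (lt_irrefl _)

/-- If `h x / x` is integrable on `(0,1)` and `h` tends to `M` at `0⁺`, then `M = 0`. -/
lemma limit_zero_atZero {h : ℝ → ℝ} {M : ℝ}
    (hi : IntegrableOn (fun x => h x / x) (Set.Ioo 0 1))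
    (ht : Tendsto h (nhdsWithin 0 (Set.Ioi 0)) (nhds M)) : M = 0 := by
  by_contra hM
  have h2 : |M| / 2 < |M| := by have := abs_pos.2 hM; linarith
  have hev : ∀ᶠ x in nhdsWithin 0 (Set.Ioi (0:ℝ)), |M| / 2 ≤ |h x| :=
    ht.abs.eventually (eventually_ge_nhds h2)
  obtain ⟨δ, hδ0, hδ⟩ := Metric.eventually_nhds_iff.1 (eventually_nhdsWithin_iff.1 hev)
  set ε := min δ 1 with hε
  have hε0 : 0 < ε := lt_min hδ0 one_pos
  have hε1 : ε ≤ 1 := min_le_right _ _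
  have key : IntegrableOn (fun x : ℝ => |M| / 2 * x⁻¹) (Set.Ioo 0 ε) := by
    refine Integrable.mono' ((hi.mono_set (Set.Ioo_subset_Ioo_right hε1)).abs) ?_ ?_
    · exact (measurable_const.mul measurable_inv).aestronglyMeasurable
    · filter_upwards [ae_restrict_mem measurableSet_Ioo] with x hx
      have hx0 : (0:ℝ) < x := hx.1
      have hxd : dist x 0 < δ := by
        rw [Real.dist_eq, sub_zero, abs_of_pos hx0]
        exact lt_of_lt_of_le hx.2 (min_le_left _ _)
      have : |M| / 2 ≤ |h x| := hδ hxd hx0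
      rw [Real.norm_eq_abs, abs_of_nonneg (by positivity)]
      calc |M| / 2 * x⁻¹ ≤ |h x| * x⁻¹ :=
            mul_le_mul_of_nonneg_right this (by positivity)
        _ ≤ |h x / x| := by rw [abs_div, div_eq_mul_inv, abs_of_pos hx0]
  have hinv : IntegrableOn (fun x : ℝ => x⁻¹) (Set.Ioo 0 ε) := by
    have hM2 : |M| / 2 ≠ 0 := by positivity
    have heq : (fun x : ℝ => x⁻¹) = fun x => (|M| / 2)⁻¹ * (|M| / 2 * x⁻¹) := by
      funext x; rw [← mul_assoc, inv_mul_cancel₀ hM2, one_mul]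
    rw [heq]; exact key.const_mul _
  have : IntegrableOn (fun x : ℝ => x ^ (-1 : ℝ)) (Set.Ioo 0 ε) := by
    refine (integrableOn_congr_fun (fun x hx => ?_) measurableSet_Ioo).2 hinv
    rw [Real.rpow_neg_one]
  rw [intervalIntegral.integrableOn_Ioo_rpow_iff hε0] at this
  exact absurd this (lt_irrefl _)

lemma tendsto_intervalIntegral_Ioc_left {f : ℝ → ℝ} (hf : IntegrableOn f (Set.Ioc 0 1)) :
    Tendsto (fun t => ∫ x in t..1, f x) (nhdsWithin 0 (Set.Ioi 0))
      (nhds (∫ x in Set.Ioc (0:ℝ) 1, f x)) := by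
  have hφ : AECover (volume.restrict (Set.Ioc (0:ℝ) 1)) (nhdsWithin 0 (Set.Ioi 0))
      (fun t => Set.Ioi t) := by
    constructor
    · filter_upwards [ae_restrict_mem measurableSet_Ioc] with x hx
      exact Filter.Eventually.filter_mono nhdsWithin_le_nhds (eventually_lt_nhds hx.1)
    · intro t; exact measurableSet_Ioi
  refine (hφ.integral_tendsto_of_countably_generated hf).congr' ?_
  filter_upwards [Ioo_mem_nhdsGT_of_mem (Set.mem_Ico.2 ⟨le_refl 0, one_pos⟩)] with t ht
  have hset : Set.Ioi t ∩ Set.Ioc 0 1 = Set.Ioc t 1 := by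
    ext x
    simp only [Set.mem_inter_iff, Set.mem_Ioi, Set.mem_Ioc]
    constructor
    · rintro ⟨h1, _, h3⟩; exact ⟨h1, h3⟩
    · rintro ⟨h1, h2⟩; exact ⟨h1, ht.1.trans h1, h2⟩
  rw [Measure.restrict_restrict measurableSet_Ioi, hset,
    intervalIntegral.integral_of_le ht.2.le]

lemma mellin_xdop_step {f : ℝ → ℝ} {κ : ℝ} (hκ : 0 < κ)
    (hd : ∀ x : ℝ, 0 < x → DifferentiableAt ℝ f x)
    (h1 : IntegrableOn (fun x => x ^ (κ - 1) * f x) (Set.Ioi 0))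
    (h2 : IntegrableOn (fun x => x ^ (κ - 1) * xdop f x) (Set.Ioi 0)) :
    Mell (xdop f) κ = -κ * Mell f κ := by
  set h : ℝ → ℝ := fun x => x ^ κ * f x with hh
  set h' : ℝ → ℝ := fun x => κ * (x ^ (κ - 1) * f x) + x ^ (κ - 1) * xdop f x with hh'
  have hder : ∀ x : ℝ, 0 < x → HasDerivAt h (h' x) x := by
    intro x hx
    have ha : HasDerivAt (fun y : ℝ => y ^ κ) (κ * x ^ (κ - 1)) x :=
      Real.hasDerivAt_rpow_const (Or.inl (ne_of_gt hx))
    have hb := (hd x hx).hasDerivAt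
    have : HasDerivAt (fun y => y ^ κ * f y) (κ * x ^ (κ - 1) * f x + x ^ κ * deriv f x) x :=
      ha.fun_mul hb
    convert this using 1
    simp only [hh', xdop]
    rw [show x ^ (κ - 1) * (x * deriv f x) = (x ^ (κ - 1) * x) * deriv f x by ring,
      Real.rpow_sub_one (ne_of_gt hx), div_mul_cancel₀ _ (ne_of_gt hx)]
    ring
  have hh'int : IntegrableOn h' (Set.Ioi 0) := (h1.const_mul κ).add h2
  have ftc : ∀ t u : ℝ, 0 < t → 0 < u → ∫ x in t..u, h' x = h u - h t := by
    intro t u ht hu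
    refine intervalIntegral.integral_eq_sub_of_hasDerivAt (fun x hx => ?_) ?_
    · refine hder x ?_
      rcases Set.mem_uIcc.1 hx with ⟨hx1, _⟩ | ⟨hx1, _⟩
      · exact lt_of_lt_of_le ht hx1
      · exact lt_of_lt_of_le hu hx1
    · refine (hh'int.mono_set ?_).intervalIntegrable
      intro x hx
      rcases Set.mem_uIcc.1 hx with ⟨hx1, _⟩ | ⟨hx1, _⟩
      · exact lt_of_lt_of_le ht hx1
      · exact lt_of_lt_of_le hu hx1
  -- limit at infinity
  have hItop : IntegrableOn h' (Set.Ioi 1) := hh'int.mono_set (Set.Ioi_subset_Ioi zero_le_one)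
  have hLtop : Tendsto h atTop (nhds (h 1 + ∫ x in Set.Ioi (1:ℝ), h' x)) := by
    have hTT := intervalIntegral_tendsto_integral_Ioi 1 hItop (tendsto_id (x := atTop))
    refine Tendsto.congr' ?_ (hTT.const_add (h 1))
    filter_upwards [eventually_ge_atTop (1:ℝ)] with t ht
    simp only [id]
    rw [ftc 1 t one_pos (lt_of_lt_of_le one_pos ht)]
    ring
  have hL0 : h 1 + (∫ x in Set.Ioi (1:ℝ), h' x) = 0 := by
    refine limit_zero_atTop ?_ hLtop
    refine (integrableOn_congr_fun (fun x hx => ?_) measurableSet_Ioi).2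
      (h1.mono_set (Set.Ioi_subset_Ioi zero_le_one))
    have hx0 : (0:ℝ) < x := lt_trans one_pos hx
    simp only [hh]
    rw [Real.rpow_sub_one (ne_of_gt hx0)]
    field_simp
  -- limit at zero
  have hIbot : IntegrableOn h' (Set.Ioc 0 1) := hh'int.mono_set Set.Ioc_subset_Ioi_self
  have hLbot : Tendsto h (nhdsWithin 0 (Set.Ioi 0))
      (nhds (h 1 - ∫ x in Set.Ioc (0:ℝ) 1, h' x)) := by
    have hTT := tendsto_intervalIntegral_Ioc_left hIbot
    refine Tendsto.congr' ?_ (tendsto_const_nhds.sub hTT)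
    filter_upwards [self_mem_nhdsWithin] with t ht
    rw [ftc t 1 ht one_pos]
    ring
  have hM0 : h 1 - (∫ x in Set.Ioc (0:ℝ) 1, h' x) = 0 := by
    refine limit_zero_atZero ?_ hLbot
    refine (integrableOn_congr_fun (fun x hx => ?_) measurableSet_Ioo).2
      (h1.mono_set (fun x hx => hx.1))
    have hx0 : (0:ℝ) < x := hx.1
    simp only [hh]
    rw [Real.rpow_sub_one (ne_of_gt hx0)]
    field_simp
  -- total integral of h' is zero
  have htot : (∫ x in Set.Ioi (0:ℝ), h' x) = 0 := by
    rw [← Set.Ioc_union_Ioi_eq_Ioi (zero_le_one : (0:ℝ) ≤ 1),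
      setIntegral_union (Set.Ioc_disjoint_Ioi le_rfl) measurableSet_Ioi hIbot hItop]
    linarith
  have hsplit : (∫ x in Set.Ioi (0:ℝ), h' x)
      = κ * (∫ x in Set.Ioi (0:ℝ), x ^ (κ - 1) * f x)
        + ∫ x in Set.Ioi (0:ℝ), x ^ (κ - 1) * xdop f x := by
    rw [integral_add (h1.const_mul κ) h2, integral_const_mul]
  have hcomm1 : Mell (xdop f) κ = ∫ x in Set.Ioi (0:ℝ), x ^ (κ - 1) * xdop f x := by
    unfold Mell
    exact setIntegral_congr_fun measurableSet_Ioi fun x _ => mul_comm _ _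
  have hcomm2 : Mell f κ = ∫ x in Set.Ioi (0:ℝ), x ^ (κ - 1) * f x := by
    unfold Mell
    exact setIntegral_congr_fun measurableSet_Ioi fun x _ => mul_comm _ _
  rw [hcomm1, hcomm2]
  rw [htot] at hsplit
  linarith



lemma vdm_eq {m : ℕ} (a : Fin m → ℝ) : vdm a = (Matrix.vandermonde a).det := by
  rw [Matrix.det_vandermonde, vdm, Finset.prod_sigma']
  refine Finset.prod_nbij' (fun p => ⟨p.1, p.2⟩) (fun p => (p.1, p.2)) ?_ ?_ ?_ ?_ ?_
  · rintro ⟨i, j⟩ hij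
    simp only [Finset.mem_filter, Finset.mem_univ, true_and] at hij
    simp [Finset.mem_Ioi, hij]
  · rintro ⟨i, j⟩ hij
    simp only [Finset.mem_sigma, Finset.mem_univ, Finset.mem_Ioi, true_and] at hij
    simp [hij]
  · rintro ⟨i, j⟩ _; rfl
  · rintro ⟨i, j⟩ _; rfl
  · rintro ⟨i, j⟩ _; rfl

lemma vdm_ne_zero {m : ℕ} {a : Fin m → ℝ} (ha : Function.Injective a) : vdm a ≠ 0 := by
  rw [vdm]
  refine Finset.prod_ne_zero_iff.2 fun p hp => ?_
  simp only [Finset.mem_filter] at hp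
  exact sub_ne_zero.2 fun h => (ne_of_lt hp.2) (ha h).symm

lemma vdm_sub_const {m : ℕ} (a : Fin m → ℝ) (t : ℝ) :
    vdm (fun i => a i - t) = vdm a := by
  rw [vdm, vdm]; exact Finset.prod_congr rfl fun p _ => by ring

lemma null_noninj {n : ℕ} :
    volume {a : Fin n → ℝ | ∃ i j : Fin n, i ≠ j ∧ a i = a j} = 0 := by
  have hsub : {a : Fin n → ℝ | ∃ i j : Fin n, i ≠ j ∧ a i = a j}
      ⊆ ⋃ p ∈ {q : Fin n × Fin n | q.1 ≠ q.2}, {a : Fin n → ℝ | a p.1 = a p.2} := by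
    rintro a ⟨i, j, hij, hval⟩
    exact Set.mem_biUnion (show ((i, j) : Fin n × Fin n) ∈ {q : Fin n × Fin n | q.1 ≠ q.2} from hij)
      (show a ∈ {a : Fin n → ℝ | a i = a j} from hval)
  refine measure_mono_null hsub (measure_biUnion_null_iff (Set.countable_univ.mono
    (Set.subset_univ _)) |>.2 ?_)
  rintro ⟨i, j⟩ hij
  simp only [Set.mem_setOf_eq] at hij
  set φ : (Fin n → ℝ) →ₗ[ℝ] ℝ := (LinearMap.proj (R := ℝ) (φ := fun _ : Fin n => ℝ) i) - (LinearMap.proj (R := ℝ) (φ := fun _ : Fin n => ℝ) j) with hφ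
  have hset : {a : Fin n → ℝ | a i = a j} = (LinearMap.ker φ : Set (Fin n → ℝ)) := by
    ext a
    simp only [Set.mem_setOf_eq, SetLike.mem_coe, LinearMap.mem_ker, hφ,
      LinearMap.sub_apply, LinearMap.proj_apply, sub_eq_zero]
  rw [hset]
  refine Measure.addHaar_submodule _ _ fun htop => ?_
  have h1 : φ (Pi.single i 1) = 1 := by
    rw [hφ, LinearMap.sub_apply, LinearMap.proj_apply, LinearMap.proj_apply,
      Pi.single_eq_same, Pi.single_eq_of_ne (Ne.symm hij), sub_zero]
  have : φ (Pi.single i 1) = 0 := by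
    have hmem : Pi.single i 1 ∈ LinearMap.ker φ := htop ▸ Submodule.mem_top
    exact hmem
  rw [h1] at this; exact one_ne_zero this



lemma andreief {n : ℕ} (f g : Fin n → ℝ → ℝ)
    (hfg : ∀ b c, Integrable (fun x => f b x * g c x)) :
    (∫ a : Fin n → ℝ, Matrix.det (Matrix.of fun b c => f b (a c)) *
        Matrix.det (Matrix.of fun b c => g b (a c)))
      = (n.factorial : ℝ) * Matrix.det (Matrix.of fun b c => ∫ x : ℝ, f b x * g c x) := by
  have expand : ∀ a : Fin n → ℝ,
      Matrix.det (Matrix.of fun b c => f b (a c)) * Matrix.det (Matrix.of fun b c => g b (a c))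
      = ∑ σ : Equiv.Perm (Fin n), ∑ τ : Equiv.Perm (Fin n),
          (((Equiv.Perm.sign σ : ℤ) : ℝ) * ((Equiv.Perm.sign τ : ℤ) : ℝ)) *
            ∏ c : Fin n, (f (σ c) (a c) * g (τ c) (a c)) := by
    intro a
    rw [Matrix.det_apply, Matrix.det_apply, Finset.sum_mul_sum]
    refine Finset.sum_congr rfl fun σ _ => Finset.sum_congr rfl fun τ _ => ?_
    simp only [Matrix.of_apply, Units.smul_def, zsmul_eq_mul, Finset.prod_mul_distrib]
    push_cast
    ring
  simp_rw [expand]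
  rw [integral_finset_sum]
  · have key : ∀ σ τ : Equiv.Perm (Fin n),
        (∫ a : Fin n → ℝ, (((Equiv.Perm.sign σ : ℤ) : ℝ) * ((Equiv.Perm.sign τ : ℤ) : ℝ)) *
            ∏ c : Fin n, (f (σ c) (a c) * g (τ c) (a c)))
        = (((Equiv.Perm.sign σ : ℤ) : ℝ) * ((Equiv.Perm.sign τ : ℤ) : ℝ)) *
            ∏ c : Fin n, ∫ x : ℝ, f (σ c) x * g (τ c) x := by
      intro σ τ
      rw [integral_const_mul, MeasureTheory.integral_fintype_prod_volume_eq_prod (𝕜 := ℝ)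
        (f := fun c x => f (σ c) x * g (τ c) x)]
    have : ∀ σ : Equiv.Perm (Fin n),
        (∫ a : Fin n → ℝ, ∑ τ : Equiv.Perm (Fin n),
          (((Equiv.Perm.sign σ : ℤ) : ℝ) * ((Equiv.Perm.sign τ : ℤ) : ℝ)) *
            ∏ c : Fin n, (f (σ c) (a c) * g (τ c) (a c)))
        = Matrix.det (Matrix.of fun b c => ∫ x : ℝ, f b x * g c x) := by
      intro σ
      rw [integral_finset_sum]
      · calc (∑ τ : Equiv.Perm (Fin n), ∫ a : Fin n → ℝ,
            (((Equiv.Perm.sign σ : ℤ) : ℝ) * ((Equiv.Perm.sign τ : ℤ) : ℝ)) *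
              ∏ c : Fin n, (f (σ c) (a c) * g (τ c) (a c)))
            = ∑ τ : Equiv.Perm (Fin n),
              (((Equiv.Perm.sign σ : ℤ) : ℝ) * ((Equiv.Perm.sign τ : ℤ) : ℝ)) *
                ∏ c : Fin n, ∫ x : ℝ, f (σ c) x * g (τ c) x := by
              exact Finset.sum_congr rfl fun τ _ => key σ τ
          _ = ∑ ρ : Equiv.Perm (Fin n),
              ((Equiv.Perm.sign ρ : ℤ) : ℝ) *
                ∏ b : Fin n, ∫ x : ℝ, f b x * g (ρ b) x := by
              rw [← Equiv.sum_comp (Equiv.mulRight σ)]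
              refine Finset.sum_congr rfl fun ρ _ => ?_
              simp only [Equiv.coe_mulRight, Equiv.Perm.mul_apply]
              have hsign : (((Equiv.Perm.sign σ : ℤ) : ℝ) *
                  ((Equiv.Perm.sign (ρ * σ) : ℤ) : ℝ)) = ((Equiv.Perm.sign ρ : ℤ) : ℝ) := by
                rw [Equiv.Perm.sign_mul]
                rcases Int.units_eq_one_or (Equiv.Perm.sign σ) with h | h <;>
                  simp [h] <;> push_cast <;> ring
              rw [hsign, ← Equiv.prod_comp σ (fun b => ∫ x : ℝ, f b x * g (ρ b) x)]
          _ = Matrix.det (Matrix.of fun b c => ∫ x : ℝ, f b x * g c x) := by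
              rw [← Matrix.det_transpose, Matrix.det_apply]
              refine Finset.sum_congr rfl fun ρ _ => ?_
              simp only [Matrix.transpose_apply, Matrix.of_apply, Units.smul_def, zsmul_eq_mul]
      · intro τ _
        exact ((Integrable.fintype_prod (𝕜 := ℝ)
          (f := fun c x => f (σ c) x * g (τ c) x) fun c => hfg _ _).const_mul _)
    rw [Finset.sum_congr rfl fun σ _ => this σ, Finset.sum_const, Finset.card_univ,
      Fintype.card_perm, nsmul_eq_mul, Fintype.card_fin]
  · intro σ _
    refine integrable_finset_sum _ fun τ _ => ?_
    exact ((Integrable.fintype_prod (𝕜 := ℝ)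
      (f := fun c x => f (σ c) x * g (τ c) x) fun c => hfg _ _).const_mul _)


end Helpers

/-- for a Pólya ensemble on `GL(n,ℂ)`, the normalization constant is
`C_n[ω] = ∏_{j=1}^n 1/(j!·Mω(j))` and the multivariate Mellin (spherical) transform factorizes
into the univariate Mellin transforms `∏_j Mω(s_j − (n−1)/2)/Mω(j)`. -/
theorem mellinTransform_polyaEnsemble_GL
    (n : ℕ) (hn : 1 ≤ n) (ω : ℝ → ℝ)
    (hpos : ∀ x : ℝ, 0 < x → 0 ≤ ω x)
    (hdiff : ∀ j : ℕ, j < n - 1 → ∀ x : ℝ, 0 < x → DifferentiableAt ℝ (xdop^[j] ω) x)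
    (hint : ∀ κ : ℝ, 1 ≤ κ → κ ≤ n → ∀ j : ℕ, j ≤ n - 1 →
      IntegrableOn (fun x : ℝ => x ^ (κ - 1) * |(xdop^[j] ω) x|) (Set.Ioi 0))
    (hM : ∀ j : ℕ, 1 ≤ j → j ≤ n → 0 < Mell ω (j : ℝ))
    (C : ℝ) (p : (Fin n → ℝ) → ℝ)
    (hp : ∀ a : Fin n → ℝ, (∀ i, 0 < a i) →
      p a = C * vdm a * Matrix.det (Matrix.of fun b c : Fin n =>
        (-1 : ℝ) ^ (b : ℕ) * (xdop^[(b : ℕ)] ω) (a c)))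
    (hp0 : ∀ a : Fin n → ℝ, (∀ i, 0 < a i) → 0 ≤ p a)
    (hpint : IntegrableOn p (Set.univ.pi (fun _ : Fin n => Set.Ioi (0:ℝ))))
    (hp1 : ∫ a in Set.univ.pi (fun _ : Fin n => Set.Ioi (0:ℝ)), p a = 1) :
    C = (∏ j ∈ Finset.Icc 1 n, 1 / ((j.factorial : ℝ) * Mell ω (j : ℝ))) ∧
    ∀ s : Fin n → ℝ, Function.Injective s →
      (∀ c : Fin n, 1 ≤ s c - ((n : ℝ) - 1) / 2 ∧ s c - ((n : ℝ) - 1) / 2 ≤ n) →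
      (∏ j ∈ Finset.range n, (j.factorial : ℝ)) *
        ∫ a in Set.univ.pi (fun _ : Fin n => Set.Ioi (0:ℝ)),
          p a *
            Matrix.det (Matrix.of fun b c : Fin n => (a b) ^ (s c - ((n : ℝ) + 1) / 2)) /
            (vdm s * vdm a)
      = ∏ j : Fin n, Mell ω (s j - ((n : ℝ) - 1) / 2) / Mell ω ((j : ℝ) + 1) := by
  set S := Set.univ.pi (fun _ : Fin n => Set.Ioi (0:ℝ)) with hSdef
  have hS : MeasurableSet S := MeasurableSet.univ_pi (fun _ => measurableSet_Ioi)
  have hjn : ∀ c : Fin n, (c : ℕ) ≤ n - 1 := fun c => Nat.le_sub_one_of_lt c.2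
  have hn1R : (1:ℝ) ≤ (n:ℝ) := by exact_mod_cast hn
  -- measurability of the iterates on (0,∞)
  have hmeas : ∀ j : ℕ, AEStronglyMeasurable (xdop^[j] ω) (volume.restrict (Set.Ioi 0)) := by
    intro j
    cases j with
    | zero =>
      have habs : IntegrableOn (fun x : ℝ => |ω x|) (Set.Ioi 0) := by
        have h := hint 1 le_rfl hn1R 0 (Nat.zero_le _)
        refine (integrableOn_congr_fun (fun x hx => ?_) measurableSet_Ioi).1 h
        simp [Real.rpow_zero]
      simp only [Function.iterate_zero_apply]
      refine habs.1.congr ?_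
      filter_upwards [ae_restrict_mem measurableSet_Ioi] with x hx
      exact abs_of_nonneg (hpos x hx)
    | succ j =>
      rw [Function.iterate_succ_apply']
      exact (measurable_id.mul (measurable_deriv _)).aestronglyMeasurable
  -- integrability without absolute values
  have hIntOn : ∀ κ : ℝ, 1 ≤ κ → κ ≤ (n:ℝ) → ∀ j : ℕ, j ≤ n - 1 →
      IntegrableOn (fun x : ℝ => x ^ (κ - 1) * (xdop^[j] ω) x) (Set.Ioi 0) := by
    intro κ hκ1 hκ2 j hj
    refine Integrable.mono' (hint κ hκ1 hκ2 j hj) ?_ ?_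
    · exact ((measurable_id.pow_const (κ - 1)).aestronglyMeasurable).mul (hmeas j)
    · filter_upwards [ae_restrict_mem measurableSet_Ioi] with x hx
      rw [Real.norm_eq_abs, abs_mul, abs_of_nonneg (Real.rpow_nonneg (le_of_lt hx) _)]
  -- the Mellin transform of the iterates
  have hMellIter : ∀ j : ℕ, j ≤ n - 1 → ∀ κ : ℝ, 1 ≤ κ → κ ≤ (n:ℝ) →
      Mell (xdop^[j] ω) κ = (-κ) ^ j * Mell ω κ := by
    intro j
    induction j with
    | zero => intro _ κ _ _; simp
    | succ j ih =>
      intro hj κ hκ1 hκ2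
      have hj' : j ≤ n - 1 := Nat.le_of_succ_le hj
      have hjlt : j < n - 1 := Nat.lt_of_succ_le hj
      have h2' : IntegrableOn (fun x : ℝ => x ^ (κ - 1) * xdop (xdop^[j] ω) x) (Set.Ioi 0) := by
        have := hIntOn κ hκ1 hκ2 (j+1) hj
        rwa [Function.iterate_succ_apply'] at this
      rw [Function.iterate_succ_apply',
        mellin_xdop_step (lt_of_lt_of_le one_pos hκ1) (fun x hx => hdiff j hjlt x hx)
          (hIntOn κ hκ1 hκ2 j hj') h2', ih hj' κ hκ1 hκ2]
      ring
  -- the signed Mellin transforms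
  have hsignedMell : ∀ (c : Fin n) (κ : ℝ), 1 ≤ κ → κ ≤ (n:ℝ) →
      (∫ x in Set.Ioi (0:ℝ), x ^ (κ - 1) * ((-1:ℝ) ^ (c:ℕ) * (xdop^[(c:ℕ)] ω) x))
        = κ ^ (c:ℕ) * Mell ω κ := by
    intro c κ hκ1 hκ2
    rw [show (fun x : ℝ => x ^ (κ-1) * ((-1:ℝ)^(c:ℕ) * (xdop^[(c:ℕ)] ω) x))
        = fun x => (-1:ℝ)^(c:ℕ) * ((xdop^[(c:ℕ)] ω) x * x ^ (κ-1)) from funext fun x => by ring]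
    rw [integral_const_mul]
    have hrfl : (∫ x in Set.Ioi (0:ℝ), (xdop^[(c:ℕ)] ω) x * x ^ (κ - 1))
        = Mell (xdop^[(c:ℕ)] ω) κ := rfl
    rw [hrfl, hMellIter (c:ℕ) (hjn c) κ hκ1 hκ2, ← mul_assoc, ← mul_pow,
      show (-1:ℝ) * -κ = κ by ring]
  -- the key determinantal integral
  have key : ∀ κv : Fin n → ℝ, (∀ b, 1 ≤ κv b) → (∀ b, κv b ≤ (n:ℝ)) →
      (∫ a in S, Matrix.det (Matrix.of fun b c : Fin n => (a c) ^ (κv b - 1)) *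
          Matrix.det (Matrix.of fun b c : Fin n => (-1:ℝ) ^ (b:ℕ) * (xdop^[(b:ℕ)] ω) (a c)))
        = (n.factorial : ℝ) * ((∏ b, Mell ω (κv b)) * vdm κv) := by
    intro κv hκ1 hκ2
    set F : Fin n → ℝ → ℝ :=
      fun b => Set.indicator (Set.Ioi 0) (fun x => x ^ (κv b - 1)) with hF
    set G : Fin n → ℝ → ℝ :=
      fun b => Set.indicator (Set.Ioi 0) (fun x => (-1:ℝ)^(b:ℕ) * (xdop^[(b:ℕ)] ω) x) with hG
    have hprodind : ∀ (b c : Fin n), (fun x => F b x * G c x) = Set.indicator (Set.Ioi 0)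
        (fun x => (-1:ℝ)^(c:ℕ) * (x ^ (κv b - 1) * (xdop^[(c:ℕ)] ω) x)) := by
      intro b c
      funext x
      by_cases hx : x ∈ Set.Ioi (0:ℝ)
      · simp only [hF, hG, Set.indicator_of_mem hx]; ring
      · simp [hF, hG, Set.indicator_of_notMem hx]
    have hFG : ∀ b c : Fin n, Integrable (fun x => F b x * G c x) := by
      intro b c
      rw [hprodind b c, integrable_indicator_iff measurableSet_Ioi]
      exact (hIntOn (κv b) (hκ1 b) (hκ2 b) (c:ℕ) (hjn c)).const_mul _
    have hdet : ∀ a : Fin n → ℝ,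
        Matrix.det (Matrix.of fun b c => F b (a c)) * Matrix.det (Matrix.of fun b c => G b (a c))
        = Set.indicator S (fun a : Fin n → ℝ =>
            Matrix.det (Matrix.of fun b c : Fin n => (a c) ^ (κv b - 1)) *
            Matrix.det (Matrix.of fun b c : Fin n =>
              (-1:ℝ)^(b:ℕ) * (xdop^[(b:ℕ)] ω) (a c))) a := by
      intro a
      by_cases ha : a ∈ S
      · rw [Set.indicator_of_mem ha]
        have hmem : ∀ c : Fin n, a c ∈ Set.Ioi (0:ℝ) := fun c => ha c (Set.mem_univ c)
        have hFmat : (Matrix.of fun b c => F b (a c))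
            = (Matrix.of fun b c : Fin n => (a c) ^ (κv b - 1)) := by
          ext b c
          simp only [Matrix.of_apply, hF]
          exact Set.indicator_of_mem (hmem c) _
        have hGmat : (Matrix.of fun b c => G b (a c))
            = (Matrix.of fun b c : Fin n => (-1:ℝ)^(b:ℕ) * (xdop^[(b:ℕ)] ω) (a c)) := by
          ext b c
          simp only [Matrix.of_apply, hG]
          exact Set.indicator_of_mem (hmem c) _
        rw [hFmat, hGmat]
      · rw [Set.indicator_of_notMem ha]
        have hex : ∃ c : Fin n, a c ∉ Set.Ioi (0:ℝ) := by
          by_contra hcon; push_neg at hcon; exact ha fun i _ => hcon i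
        obtain ⟨c, hc⟩ := hex
        have hFzero : Matrix.det (Matrix.of fun b c' => F b (a c')) = 0 :=
          Matrix.det_eq_zero_of_column_eq_zero c fun b => by
            simp only [Matrix.of_apply, hF]
            exact Set.indicator_of_notMem hc _
        rw [hFzero, zero_mul]
    have hentry : ∀ b c : Fin n,
        (∫ x : ℝ, F b x * G c x) = Mell ω (κv b) * (κv b) ^ (c:ℕ) := by
      intro b c
      have heq2 : (fun x => F b x * G c x) = Set.indicator (Set.Ioi 0)
          (fun x => x ^ (κv b - 1) * ((-1:ℝ)^(c:ℕ) * (xdop^[(c:ℕ)] ω) x)) := by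
        rw [hprodind b c]; funext x
        by_cases hx : x ∈ Set.Ioi (0:ℝ)
        · simp only [Set.indicator_of_mem hx]; ring
        · simp [Set.indicator_of_notMem hx]
      rw [heq2, integral_indicator measurableSet_Ioi,
        hsignedMell c (κv b) (hκ1 b) (hκ2 b)]
      ring
    calc (∫ a in S, Matrix.det (Matrix.of fun b c : Fin n => (a c) ^ (κv b - 1)) *
            Matrix.det (Matrix.of fun b c : Fin n => (-1:ℝ) ^ (b:ℕ) * (xdop^[(b:ℕ)] ω) (a c)))
        = ∫ a : Fin n → ℝ, Matrix.det (Matrix.of fun b c => F b (a c)) *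
            Matrix.det (Matrix.of fun b c => G b (a c)) := by
          rw [← integral_indicator hS]
          exact integral_congr_ae (ae_of_all _ fun a => (hdet a).symm)
      _ = (n.factorial : ℝ) * Matrix.det (Matrix.of fun b c => ∫ x : ℝ, F b x * G c x) :=
          andreief F G hFG
      _ = (n.factorial : ℝ) * ((∏ b, Mell ω (κv b)) * vdm κv) := by
          have hmat : (Matrix.of fun b c => ∫ x : ℝ, F b x * G c x)
              = Matrix.of (fun b c => (fun i => Mell ω (κv i)) b * Matrix.vandermonde κv b c) := by
            ext b c
            simp only [Matrix.of_apply, Matrix.vandermonde_apply]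
            exact hentry b c
          rw [hmat, Matrix.det_mul_column, Matrix.det_vandermonde, vdm_eq,
            Matrix.det_vandermonde]
  -- the reference exponents κ0
  set κ0 : Fin n → ℝ := fun b => ((b:ℕ):ℝ) + 1 with hκ0
  have hκ01 : ∀ b, 1 ≤ κ0 b := by
    intro b; simp only [hκ0]
    have : (0:ℝ) ≤ ((b:ℕ):ℝ) := Nat.cast_nonneg _
    linarith
  have hκ02 : ∀ b, κ0 b ≤ (n:ℝ) := by
    intro b; simp only [hκ0]
    have : ((b:ℕ):ℝ) + 1 ≤ (n:ℝ) := by exact_mod_cast Nat.succ_le_of_lt b.2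
    linarith
  -- the first determinant for κ0 is the Vandermonde determinant
  have hvdmdet : ∀ a ∈ S,
      Matrix.det (Matrix.of fun b c : Fin n => (a c) ^ (κ0 b - 1)) = vdm a := by
    intro a ha
    have hmem : ∀ c : Fin n, (0:ℝ) < a c := fun c => ha c (Set.mem_univ c)
    have hmat : (Matrix.of fun b c : Fin n => (a c) ^ (κ0 b - 1))
        = (Matrix.vandermonde a).transpose := by
      ext b c
      simp only [Matrix.of_apply, Matrix.transpose_apply, Matrix.vandermonde_apply]
      have hexp : κ0 b - 1 = ((b:ℕ):ℝ) := by simp [hκ0]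
      rw [hexp, Real.rpow_natCast]
    rw [hmat, Matrix.det_transpose, ← vdm_eq]
  -- normalization identity
  set P0 : ℝ := ∏ b : Fin n, Mell ω (κ0 b) with hP0
  have h1eq : (1:ℝ) = C * ((n.factorial : ℝ) * (P0 * vdm κ0)) := by
    rw [← hp1, ← key κ0 hκ01 hκ02, ← integral_const_mul]
    refine setIntegral_congr_fun hS fun a ha => ?_
    rw [hp a (fun i => ha i (Set.mem_univ i)), hvdmdet a ha]
    ring
  -- value of vdm κ0
  obtain ⟨m, rfl⟩ : ∃ m, n = m + 1 := ⟨n - 1, (Nat.succ_pred_eq_of_pos hn).symm⟩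
  have hvdmκ0 : vdm κ0 = (Nat.superFactorial m : ℝ) := by
    have h1 : vdm (fun i : Fin (m+1) => κ0 i - 1) = vdm κ0 := vdm_sub_const κ0 1
    have h2 : (fun i : Fin (m+1) => κ0 i - 1) = fun i : Fin (m+1) => ((i:ℕ):ℝ) := by
      funext i; simp [hκ0]
    rw [← h1, h2, vdm_eq]
    exact_mod_cast Matrix.det_vandermonde_id_eq_superFactorial (R := ℝ) m
  have hsfnat : 0 < Nat.superFactorial m := by
    rw [← Nat.prod_range_succ_factorial]
    exact Finset.prod_pos fun i _ => Nat.factorial_pos i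
  have hsfpos : (0:ℝ) < (Nat.superFactorial m : ℝ) := by exact_mod_cast hsfnat
  have hMpos0 : ∀ b : Fin (m+1), 0 < Mell ω (κ0 b) := by
    intro b
    have := hM ((b:ℕ)+1) (Nat.succ_le_succ (Nat.zero_le _)) (Nat.succ_le_of_lt b.2)
    have hcast : (((b:ℕ)+1 : ℕ):ℝ) = κ0 b := by push_cast [hκ0]; ring
    rwa [hcast] at this
  have hP0pos : 0 < P0 := Finset.prod_pos fun b _ => hMpos0 b
  -- product over Icc
  have hIcc : (∏ j ∈ Finset.Icc 1 (m+1), ((j.factorial : ℝ) * Mell ω (j:ℝ)))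
      = ((m+1).factorial : ℝ) * (P0 * (Nat.superFactorial m : ℝ)) := by
    rw [← Finset.Ico_add_one_right_eq_Icc, Finset.prod_Ico_eq_prod_range]
    have hrange : m + 1 + 1 - 1 = m + 1 := by omega
    rw [hrange, Finset.prod_mul_distrib]
    have hA : (∏ k ∈ Finset.range (m+1), (((1+k).factorial : ℝ)))
        = ((m+1).factorial : ℝ) * (Nat.superFactorial m : ℝ) := by
      have h1 : (∏ k ∈ Finset.range (m+1), ((1+k).factorial)) = Nat.superFactorial (m+1) := by
        rw [Finset.prod_congr rfl fun k _ => (by rw [Nat.add_comm] :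
          (1+k).factorial = (k+1).factorial)]
        exact Nat.prod_range_factorial_succ (m+1)
      rw [← Nat.cast_prod, h1, Nat.superFactorial_succ]
      push_cast; ring
    have hB : (∏ k ∈ Finset.range (m+1), Mell ω ((1+k : ℕ):ℝ)) = P0 := by
      rw [hP0, ← Fin.prod_univ_eq_prod_range (fun k : ℕ => Mell ω ((1+k : ℕ):ℝ)) (m+1)]
      refine Finset.prod_congr rfl fun b _ => ?_
      have hc : ((1 + (b:ℕ) : ℕ):ℝ) = κ0 b := by rw [hκ0]; push_cast; ring
      rw [hc]
    rw [hA, hB]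
    ring
  have hfacpos : (0:ℝ) < ((m+1).factorial : ℝ) := by positivity
  have hCval : C = (((m+1).factorial : ℝ) * (P0 * (Nat.superFactorial m : ℝ)))⁻¹ := by
    have hA0 : ((m+1).factorial : ℝ) * (P0 * (Nat.superFactorial m : ℝ)) ≠ 0 := by positivity
    field_simp [hvdmκ0] at h1eq
    field_simp
    rw [hvdmκ0] at h1eq
    linarith [h1eq]
  constructor
  · -- the normalization constant
    rw [hCval]
    rw [show (∏ j ∈ Finset.Icc 1 (m+1), 1 / ((j.factorial : ℝ) * Mell ω (j:ℝ)))
        = (∏ j ∈ Finset.Icc 1 (m+1), ((j.factorial : ℝ) * Mell ω (j:ℝ)))⁻¹ by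
      rw [← Finset.prod_inv_distrib]
      exact Finset.prod_congr rfl fun j _ => (one_div _)]
    rw [hIcc]
  · -- the Mellin transform identity
    intro s hsinj hsrange
    set κv : Fin (m+1) → ℝ := fun c => s c - (((m+1:ℕ):ℝ) - 1) / 2 with hκv
    have hκv1 : ∀ b, 1 ≤ κv b := fun b => (hsrange b).1
    have hκv2 : ∀ b, κv b ≤ ((m+1:ℕ):ℝ) := fun b => (hsrange b).2
    have hvdmκv : vdm κv = vdm s := vdm_sub_const s _
    have hvs : vdm s ≠ 0 := vdm_ne_zero hsinj
    have hcong : (∫ a in S,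
          p a * Matrix.det (Matrix.of fun b c : Fin (m+1) =>
            (a b) ^ (s c - (((m+1:ℕ):ℝ) + 1) / 2)) / (vdm s * vdm a))
        = ∫ a in S, (C / vdm s) *
            (Matrix.det (Matrix.of fun b c : Fin (m+1) => (a c) ^ (κv b - 1)) *
             Matrix.det (Matrix.of fun b c : Fin (m+1) =>
               (-1:ℝ)^(b:ℕ) * (xdop^[(b:ℕ)] ω) (a c))) := by
      refine setIntegral_congr_ae hS ?_
      filter_upwards [measure_eq_zero_iff_ae_notMem.1 (null_noninj (n := m+1))] with a hreg ha
      have hposa : ∀ i, 0 < a i := fun i => ha i (Set.mem_univ i)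
      have hainj : Function.Injective a := by
        intro i j hij
        by_contra hne
        exact hreg ⟨i, j, hne, hij⟩
      have hva : vdm a ≠ 0 := vdm_ne_zero hainj
      rw [hp a hposa]
      have hdet1 : Matrix.det (Matrix.of fun b c : Fin (m+1) =>
            (a b) ^ (s c - (((m+1:ℕ):ℝ) + 1) / 2))
          = Matrix.det (Matrix.of fun b c : Fin (m+1) => (a c) ^ (κv b - 1)) := by
        rw [← Matrix.det_transpose (Matrix.of fun b c : Fin (m+1) =>
          (a b) ^ (s c - (((m+1:ℕ):ℝ) + 1) / 2))]
        congr 1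
        ext b c
        simp only [Matrix.transpose_apply, Matrix.of_apply]
        rw [show κv b - 1 = s b - (((m+1:ℕ):ℝ) + 1) / 2 by rw [hκv]; ring]
      rw [hdet1]
      field_simp
    rw [hcong, integral_const_mul, key κv hκv1 hκv2, hvdmκv]
    have hMne : ∀ b : Fin (m+1), Mell ω (κ0 b) ≠ 0 := fun b => ne_of_gt (hMpos0 b)
    have hRHS : (∏ j : Fin (m+1), Mell ω (s j - (((m+1:ℕ):ℝ) - 1) / 2) / Mell ω ((j : ℝ) + 1))
        = (∏ b : Fin (m+1), Mell ω (κv b)) / P0 := by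
      rw [hP0, ← Finset.prod_div_distrib]
    have hprodfact : (∏ j ∈ Finset.range (m+1), (j.factorial : ℝ))
        = (Nat.superFactorial m : ℝ) := by
      rw [← Nat.cast_prod, Nat.prod_range_succ_factorial]
    rw [hRHS, hCval, hprodfact]
    have hP0ne : P0 ≠ 0 := ne_of_gt hP0pos
    set Pv : ℝ := ∏ b : Fin (m+1), Mell ω (κv b) with hPv
    field_simp
end

section
/- Let f : (0,∞) → ℝ be twice differentiable, and set (D_{−1/2} f)(x) = x^{−1/2}·d/dx( x^{3/2}·f′(x) ). Assume that ∫₀^∞ x^{κ−1}·|f(x)| dx < ∞ and ∫₀^∞ x^{κ−1}·|(D_{−1/2}f)(x)| dx < ∞ for κ ∈ [1,2], that lim_{x→0⁺} x^{1/2}·d/dx( x^{1/2}·f(x) ) = 0, and that lim_{x→∞} x·f′(x) = 0 and lim_{x→∞} x^{1/2}·f(x) = 0. Then for every s > 0: ∫₀^∞ (D_{−1/2} f)(x) · cos(2·√(x·s)) dx = −s · ∫₀^∞ f(x) · cos(2·√(x·s)) dx. -/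
open MeasureTheory Filter

/-- FTC-2 on `(a, ∞)` with limits at both endpoints. -/
lemma ftc_Ioi_limits {F F' : ℝ → ℝ} {a la lb : ℝ}
    (hderiv : ∀ x ∈ Set.Ioi a, HasDerivAt F (F' x) x)
    (hint : IntegrableOn F' (Set.Ioi a))
    (h0 : Tendsto F (nhdsWithin a (Set.Ioi a)) (nhds la))
    (htop : Tendsto F atTop (nhds lb)) :
    ∫ x in Set.Ioi a, F' x = lb - la := by
  rw [show Set.Ioi a = Set.Ici a \ {a} by rw [Set.Ici_sdiff_left]] at h0
  set G := Function.update F a la with hGdef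
  have hG : ∀ x ∈ Set.Ioi a, HasDerivAt G (F' x) x := by
    intro x hx
    apply (hderiv x hx).congr_of_eventuallyEq
    filter_upwards [eventually_ne_nhds (ne_of_gt hx)] with y hy
    exact Function.update_of_ne hy _ _
  have htop' : Tendsto G atTop (nhds lb) := by
    apply htop.congr'
    filter_upwards [eventually_ne_atTop a] with x hx
    exact (Function.update_of_ne hx _ _).symm
  have hcont : ContinuousWithinAt G (Set.Ici a) a := continuousWithinAt_update_same.mpr h0
  have h := integral_Ioi_of_hasDerivAt_of_tendsto hcont hG hint htop'
  rw [h, hGdef, Function.update_self]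

/-- The differential operator `(D_{−1/2} f)(x) = x^{−1/2} · d/dx( x^{3/2} · f′(x) )`. -/
noncomputable def Dhalf (f : ℝ → ℝ) : ℝ → ℝ :=
  fun x => x ^ (-(1:ℝ)/2) * deriv (fun t : ℝ => t ^ ((3:ℝ)/2) * deriv f t) x

/-- the univariate Hankel-transform derivative relation
`H_{−1/2}(D_{−1/2} f)(s) = −s·H_{−1/2} f(s)`, where the Hankel kernel for `ν = −1/2` is
`cos(2√(xs))`. -/
theorem hankel_transform_derivative_relation
    (f : ℝ → ℝ)
    (hdiff : ∀ x : ℝ, 0 < x → DifferentiableAt ℝ f x ∧ DifferentiableAt ℝ (deriv f) x)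
    (hint1 : ∀ κ : ℝ, 1 ≤ κ → κ ≤ 2 →
      IntegrableOn (fun x : ℝ => x ^ (κ - 1) * |f x|) (Set.Ioi 0))
    (hint2 : ∀ κ : ℝ, 1 ≤ κ → κ ≤ 2 →
      IntegrableOn (fun x : ℝ => x ^ (κ - 1) * |Dhalf f x|) (Set.Ioi 0))
    (hlim0 : Tendsto (fun x : ℝ => x ^ ((1:ℝ)/2) * deriv (fun t : ℝ => t ^ ((1:ℝ)/2) * f t) x)
      (nhdsWithin 0 (Set.Ioi 0)) (nhds 0))
    (hlim1 : Tendsto (fun x : ℝ => x * deriv f x) atTop (nhds 0))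
    (hlim2 : Tendsto (fun x : ℝ => x ^ ((1:ℝ)/2) * f x) atTop (nhds 0)) :
    ∀ s : ℝ, 0 < s →
      ∫ x in Set.Ioi (0:ℝ), Dhalf f x * Real.cos (2 * Real.sqrt (x * s))
      = -s * ∫ x in Set.Ioi (0:ℝ), f x * Real.cos (2 * Real.sqrt (x * s)) := by
  intro s hs
  -- the function (1/2)·f + x·f′ tends to 0 at 0⁺
  have h_half : Tendsto (fun x : ℝ => 1/2 * f x + x * deriv f x)
      (nhdsWithin 0 (Set.Ioi 0)) (nhds 0) := by
    apply Filter.Tendsto.congr' _ hlim0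
    filter_upwards [self_mem_nhdsWithin] with x hx
    have hx : (0:ℝ) < x := hx
    have h := ((Real.hasDerivAt_rpow_const (p := (1:ℝ)/2) (Or.inl hx.ne')).mul
      (hdiff x hx).1.hasDerivAt).deriv
    rw [show (fun t : ℝ => t ^ ((1:ℝ)/2) * f t) = (fun x : ℝ => x ^ ((1:ℝ)/2)) * f from rfl, h]
    have e1 : x ^ ((1:ℝ)/2) * x ^ ((1:ℝ)/2 - 1) = 1 := by
      rw [← Real.rpow_add hx]; norm_num
    have e2 : x ^ ((1:ℝ)/2) * x ^ ((1:ℝ)/2) = x := by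
      rw [← Real.rpow_add hx]; norm_num
    linear_combination (1/2 * f x) * e1 + deriv f x * e2
  -- a neighbourhood of 0 on which |(1/2)·f + x·f′| ≤ 1
  have hev : ∀ᶠ x in nhdsWithin 0 (Set.Ioi 0), |1/2 * f x + x * deriv f x| ≤ 1 := by
    have h1 : Tendsto (fun x : ℝ => |1/2 * f x + x * deriv f x|)
        (nhdsWithin 0 (Set.Ioi 0)) (nhds 0) := by simpa using h_half.abs
    exact h1.eventually (eventually_le_nhds one_pos)
  obtain ⟨δ, hδ, hδsub⟩ := mem_nhdsGT_iff_exists_Ioc_subset.mp hev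
  have hδ : (0:ℝ) < δ := hδ
  -- boundedness of √x·f(x) on (0, δ)
  have hbound : ∀ x ∈ Set.Ioo (0:ℝ) δ,
      |Real.sqrt x * f x| ≤ |Real.sqrt δ * f δ| + 2 * Real.sqrt δ := by
    intro x hx
    have hb : ∀ t ∈ Set.Ioc (0:ℝ) δ, |1/2 * f t + t * deriv f t| ≤ 1 := fun t ht => hδsub ht
    have key : ∀ (ε : ℝ), ε = 1 ∨ ε = -1 → ∀ t ∈ Set.Ioi (0:ℝ),
        HasDerivAt (fun t => Real.sqrt t * f t + ε * (2 * Real.sqrt t))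
          ((Real.sqrt t)⁻¹ * (1/2 * f t + t * deriv f t + ε)) t := by
      intro ε hε t ht
      have ht : (0:ℝ) < t := ht
      have hsx : HasDerivAt Real.sqrt (1 / (2 * Real.sqrt t)) t := Real.hasDerivAt_sqrt ht.ne'
      have h := (hsx.mul (hdiff t ht).1.hasDerivAt).add ((hsx.const_mul 2).const_mul ε)
      refine h.congr_deriv ?_
      have hth : Real.sqrt t * Real.sqrt t = t := Real.mul_self_sqrt ht.le
      have ht0 : Real.sqrt t ≠ 0 := by positivity
      field_simp
      linear_combination (2 * deriv f t) * hth
    have hmono : MonotoneOn (fun t => Real.sqrt t * f t + 1 * (2 * Real.sqrt t))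
        (Set.Icc x δ) := by
      apply monotoneOn_of_deriv_nonneg (convex_Icc x δ)
      · intro t ht
        exact ((key 1 (Or.inl rfl) t (lt_of_lt_of_le hx.1 ht.1)).continuousAt).continuousWithinAt
      · intro t ht
        rw [interior_Icc] at ht
        exact ((key 1 (Or.inl rfl) t (hx.1.trans ht.1)).differentiableAt).differentiableWithinAt
      · intro t ht
        rw [interior_Icc] at ht
        have htpos : (0:ℝ) < t := hx.1.trans ht.1
        rw [(key 1 (Or.inl rfl) t htpos).deriv]
        have h1 := (abs_le.mp (hb t ⟨htpos, ht.2.le⟩)).1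
        have : (0:ℝ) ≤ (Real.sqrt t)⁻¹ := by positivity
        nlinarith
    have hanti : AntitoneOn (fun t => Real.sqrt t * f t + (-1) * (2 * Real.sqrt t))
        (Set.Icc x δ) := by
      apply antitoneOn_of_deriv_nonpos (convex_Icc x δ)
      · intro t ht
        exact ((key (-1) (Or.inr rfl) t (lt_of_lt_of_le hx.1 ht.1)).continuousAt).continuousWithinAt
      · intro t ht
        rw [interior_Icc] at ht
        exact ((key (-1) (Or.inr rfl) t (hx.1.trans ht.1)).differentiableAt).differentiableWithinAt
      · intro t ht
        rw [interior_Icc] at ht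
        have htpos : (0:ℝ) < t := hx.1.trans ht.1
        rw [(key (-1) (Or.inr rfl) t htpos).deriv]
        have h1 := (abs_le.mp (hb t ⟨htpos, ht.2.le⟩)).2
        have : (0:ℝ) ≤ (Real.sqrt t)⁻¹ := by positivity
        nlinarith
    have hxm : x ∈ Set.Icc x δ := ⟨le_refl x, hx.2.le⟩
    have hdm : δ ∈ Set.Icc x δ := ⟨hx.2.le, le_refl δ⟩
    have h1 := hmono hxm hdm hx.2.le
    have h2 := hanti hxm hdm hx.2.le
    simp only at h1 h2
    have hsx0 : (0:ℝ) ≤ Real.sqrt x := Real.sqrt_nonneg x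
    have hsd0 : (0:ℝ) ≤ Real.sqrt δ := Real.sqrt_nonneg δ
    have hle := le_abs_self (Real.sqrt δ * f δ)
    have hge := neg_abs_le (Real.sqrt δ * f δ)
    rw [abs_le]
    constructor <;> nlinarith
  -- the primitive F and its derivative
  have key : ∀ x ∈ Set.Ioi (0:ℝ),
      HasDerivAt (fun t : ℝ => t * deriv f t * Real.cos (2 * Real.sqrt (t * s))
          + 1/2 * f t * Real.cos (2 * Real.sqrt (t * s))
          + Real.sqrt s * Real.sqrt t * f t * Real.sin (2 * Real.sqrt (t * s)))
        (Dhalf f x * Real.cos (2 * Real.sqrt (x * s))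
          + s * (f x * Real.cos (2 * Real.sqrt (x * s)))) x := by
    intro x hx
    have hx : (0:ℝ) < x := hx
    obtain ⟨hd1, hd2⟩ := hdiff x hx
    have hf1 : HasDerivAt f (deriv f x) x := hd1.hasDerivAt
    have hf2 : HasDerivAt (deriv f) (deriv (deriv f) x) x := hd2.hasDerivAt
    have hsq : HasDerivAt (fun t : ℝ => Real.sqrt (t * s)) (1 / (2 * Real.sqrt (x * s)) * s) x :=
      (Real.hasDerivAt_sqrt (mul_pos hx hs).ne').comp x (hasDerivAt_mul_const s)
    have hcos : HasDerivAt (fun t : ℝ => Real.cos (2 * Real.sqrt (t * s)))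
        (-Real.sin (2 * Real.sqrt (x * s)) * (2 * (1 / (2 * Real.sqrt (x * s)) * s))) x :=
      (Real.hasDerivAt_cos _).comp x (hsq.const_mul 2)
    have hsin : HasDerivAt (fun t : ℝ => Real.sin (2 * Real.sqrt (t * s)))
        (Real.cos (2 * Real.sqrt (x * s)) * (2 * (1 / (2 * Real.sqrt (x * s)) * s))) x :=
      (Real.hasDerivAt_sin _).comp x (hsq.const_mul 2)
    have hsx : HasDerivAt Real.sqrt (1 / (2 * Real.sqrt x)) x := Real.hasDerivAt_sqrt hx.ne'
    have hT1 := ((hasDerivAt_id x).mul hf2).mul hcos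
    have hT2 := (hf1.const_mul (1/2 : ℝ)).mul hcos
    have hT3 := ((hsx.const_mul (Real.sqrt s)).mul hf1).mul hsin
    have hF := (hT1.add hT2).add hT3
    have hd3 : deriv (fun t : ℝ => t ^ ((3:ℝ)/2) * deriv f t) x
        = 3/2 * x ^ ((3:ℝ)/2 - 1) * deriv f x + x ^ ((3:ℝ)/2) * deriv (deriv f) x :=
      ((Real.hasDerivAt_rpow_const (p := (3:ℝ)/2) (Or.inl hx.ne')).mul hf2).deriv
    have hDx : Dhalf f x = 3/2 * deriv f x + x * deriv (deriv f) x := by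
      have e1 : x ^ (-(1:ℝ)/2) * x ^ ((3:ℝ)/2 - 1) = 1 := by
        rw [← Real.rpow_add hx]; norm_num
      have e2 : x ^ (-(1:ℝ)/2) * x ^ ((3:ℝ)/2) = x := by
        rw [← Real.rpow_add hx]; norm_num
      unfold Dhalf
      rw [hd3]
      linear_combination (3/2 * deriv f x) * e1 + deriv (deriv f) x * e2
    refine hF.congr_deriv ?_
    have hab : Real.sqrt (x * s) = Real.sqrt x * Real.sqrt s := Real.sqrt_mul hx.le s
    simp only [hDx, hab, id_eq, Pi.mul_apply]
    set a := Real.sqrt x with ha'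
    set b := Real.sqrt s with hb'
    have ha : a * a = x := by rw [ha']; exact Real.mul_self_sqrt hx.le
    have hb : b * b = s := by rw [hb']; exact Real.mul_self_sqrt hs.le
    have ha0 : a ≠ 0 := by rw [ha']; positivity
    have hb0 : b ≠ 0 := by rw [hb']; positivity
    rw [← ha, ← hb]
    field_simp
    ring
  -- limit of F at 0⁺
  have hF0 : Tendsto (fun x : ℝ => x * deriv f x * Real.cos (2 * Real.sqrt (x * s))
      + 1/2 * f x * Real.cos (2 * Real.sqrt (x * s))
      + Real.sqrt s * Real.sqrt x * f x * Real.sin (2 * Real.sqrt (x * s)))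
      (nhdsWithin 0 (Set.Ioi 0)) (nhds 0) := by
    have t1 : Tendsto (fun x : ℝ =>
        Real.cos (2 * Real.sqrt (x * s)) * (1/2 * f x + x * deriv f x))
        (nhdsWithin 0 (Set.Ioi 0)) (nhds 0) := by
      apply squeeze_zero_norm' (a := fun x => |1/2 * f x + x * deriv f x|)
      · filter_upwards with x
        rw [Real.norm_eq_abs, abs_mul]
        calc |Real.cos (2 * Real.sqrt (x * s))| * |1/2 * f x + x * deriv f x|
            ≤ 1 * |1/2 * f x + x * deriv f x| := by
              apply mul_le_mul_of_nonneg_right (Real.abs_cos_le_one _) (abs_nonneg _)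
          _ = |1/2 * f x + x * deriv f x| := one_mul _
      · simpa using h_half.abs
    have t2 : Tendsto (fun x : ℝ =>
        Real.sqrt s * Real.sqrt x * f x * Real.sin (2 * Real.sqrt (x * s)))
        (nhdsWithin 0 (Set.Ioi 0)) (nhds 0) := by
      apply squeeze_zero_norm' (a := fun x => Real.sqrt s * (|Real.sqrt δ * f δ| + 2 * Real.sqrt δ)
        * |Real.sin (2 * Real.sqrt (x * s))|)
      · filter_upwards [Ioo_mem_nhdsGT hδ] with x hx
        rw [Real.norm_eq_abs]
        have h1 : |Real.sqrt s * Real.sqrt x * f x * Real.sin (2 * Real.sqrt (x * s))|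
            = Real.sqrt s * |Real.sqrt x * f x| * |Real.sin (2 * Real.sqrt (x * s))| := by
          rw [abs_mul, mul_assoc (Real.sqrt s), abs_mul, abs_of_nonneg (Real.sqrt_nonneg s),
            mul_assoc]
        rw [h1]
        have := hbound x hx
        have hss : (0:ℝ) ≤ Real.sqrt s := Real.sqrt_nonneg s
        have habs : (0:ℝ) ≤ |Real.sin (2 * Real.sqrt (x * s))| := abs_nonneg _
        exact mul_le_mul_of_nonneg_right (mul_le_mul_of_nonneg_left this hss) habs
      · have hcarg : Continuous (fun x : ℝ => 2 * Real.sqrt (x * s)) :=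
          continuous_const.mul (Real.continuous_sqrt.comp (continuous_id.mul continuous_const))
        have hcont : Continuous (fun x : ℝ =>
            Real.sqrt s * (|Real.sqrt δ * f δ| + 2 * Real.sqrt δ)
            * |Real.sin (2 * Real.sqrt (x * s))|) :=
          continuous_const.mul ((Real.continuous_sin.comp hcarg).abs)
        have h0 : Real.sqrt s * (|Real.sqrt δ * f δ| + 2 * Real.sqrt δ)
            * |Real.sin (2 * Real.sqrt ((0:ℝ) * s))| = 0 := by norm_num
        have := hcont.tendsto (0:ℝ)
        rw [h0] at this
        exact this.mono_left nhdsWithin_le_nhds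
    have := t1.add t2
    rw [add_zero] at this
    apply this.congr
    intro x
    ring
  -- limit of F at ∞
  have hFtop : Tendsto (fun x : ℝ => x * deriv f x * Real.cos (2 * Real.sqrt (x * s))
      + 1/2 * f x * Real.cos (2 * Real.sqrt (x * s))
      + Real.sqrt s * Real.sqrt x * f x * Real.sin (2 * Real.sqrt (x * s)))
      atTop (nhds 0) := by
    have hsqf : Tendsto (fun x : ℝ => Real.sqrt x * f x) atTop (nhds 0) := by
      apply Filter.Tendsto.congr' _ hlim2
      filter_upwards [eventually_gt_atTop (0:ℝ)] with x hx
      rw [Real.sqrt_eq_rpow]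
    apply squeeze_zero_norm' (a := fun x => |x * deriv f x| + 1/2 * |Real.sqrt x * f x|
      + Real.sqrt s * |Real.sqrt x * f x|)
    · filter_upwards [eventually_ge_atTop (1:ℝ)] with x hx
      have h1x : (1:ℝ) ≤ Real.sqrt x := by
        rw [show (1:ℝ) = Real.sqrt 1 by simp]
        exact Real.sqrt_le_sqrt hx
      have hcos := Real.abs_cos_le_one (2 * Real.sqrt (x * s))
      have hsin := Real.abs_sin_le_one (2 * Real.sqrt (x * s))
      have hss : (0:ℝ) ≤ Real.sqrt s := Real.sqrt_nonneg s
      rw [Real.norm_eq_abs]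
      calc |x * deriv f x * Real.cos (2 * Real.sqrt (x * s))
          + 1/2 * f x * Real.cos (2 * Real.sqrt (x * s))
          + Real.sqrt s * Real.sqrt x * f x * Real.sin (2 * Real.sqrt (x * s))|
          ≤ |x * deriv f x * Real.cos (2 * Real.sqrt (x * s))|
            + |1/2 * f x * Real.cos (2 * Real.sqrt (x * s))|
            + |Real.sqrt s * Real.sqrt x * f x * Real.sin (2 * Real.sqrt (x * s))| :=
            abs_add_three _ _ _
        _ ≤ |x * deriv f x| + 1/2 * |Real.sqrt x * f x| + Real.sqrt s * |Real.sqrt x * f x| := by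
            have e1 : |x * deriv f x * Real.cos (2 * Real.sqrt (x * s))|
                = |x * deriv f x| * |Real.cos (2 * Real.sqrt (x * s))| := abs_mul _ _
            have e2 : |1/2 * f x * Real.cos (2 * Real.sqrt (x * s))|
                = 1/2 * |f x| * |Real.cos (2 * Real.sqrt (x * s))| := by
              rw [abs_mul, abs_mul]; norm_num
            have e3 : |Real.sqrt s * Real.sqrt x * f x * Real.sin (2 * Real.sqrt (x * s))|
                = Real.sqrt s * (|Real.sqrt x * f x|) * |Real.sin (2 * Real.sqrt (x * s))| := by
              rw [abs_mul, abs_mul, abs_mul, abs_of_nonneg hss,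
                abs_of_nonneg (Real.sqrt_nonneg x)]
              rw [abs_mul, abs_of_nonneg (Real.sqrt_nonneg x)]
              ring
            rw [e1, e2, e3]
            have hfx : |f x| ≤ |Real.sqrt x * f x| := by
              rw [abs_mul, abs_of_nonneg (Real.sqrt_nonneg x)]
              nlinarith [abs_nonneg (f x)]
            have b1 : |x * deriv f x| * |Real.cos (2 * Real.sqrt (x * s))| ≤ |x * deriv f x| :=
              mul_le_of_le_one_right (abs_nonneg _) hcos
            have b2 : 1/2 * |f x| * |Real.cos (2 * Real.sqrt (x * s))|
                ≤ 1/2 * |Real.sqrt x * f x| := by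
              have := mul_le_of_le_one_right (by positivity : (0:ℝ) ≤ 1/2 * |f x|) hcos
              linarith
            have b3 : Real.sqrt s * |Real.sqrt x * f x| * |Real.sin (2 * Real.sqrt (x * s))|
                ≤ Real.sqrt s * |Real.sqrt x * f x| :=
              mul_le_of_le_one_right (by positivity) hsin
            linarith
    · have a1 : Tendsto (fun x : ℝ => |x * deriv f x|) atTop (nhds 0) := by simpa using hlim1.abs
      have a2 : Tendsto (fun x : ℝ => |Real.sqrt x * f x|) atTop (nhds 0) := by
        simpa using hsqf.abs
      have := a1.add ((a2.const_mul (1/2:ℝ)).add (a2.const_mul (Real.sqrt s)))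
      simp only [mul_zero, add_zero] at this
      apply this.congr
      intro x
      ring
  -- integrability
  have hconts : Continuous (fun x : ℝ => Real.cos (2 * Real.sqrt (x * s))) :=
    Real.continuous_cos.comp
      (continuous_const.mul (Real.continuous_sqrt.comp (continuous_id.mul continuous_const)))
  have hcos_m : AEStronglyMeasurable (fun x : ℝ => Real.cos (2 * Real.sqrt (x * s)))
      (volume.restrict (Set.Ioi 0)) := hconts.aestronglyMeasurable.restrict
  have hf_m : AEStronglyMeasurable f (volume.restrict (Set.Ioi 0)) := by
    apply ContinuousOn.aestronglyMeasurable _ measurableSet_Ioi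
    intro x hx
    exact ((hdiff x hx).1.continuousAt).continuousWithinAt
  have hD_m : AEStronglyMeasurable (Dhalf f) (volume.restrict (Set.Ioi 0)) := by
    apply AEStronglyMeasurable.mul
    · apply ContinuousOn.aestronglyMeasurable _ measurableSet_Ioi
      intro x hx
      exact (Real.continuousAt_rpow_const x _ (Or.inl (ne_of_gt hx))).continuousWithinAt
    · exact (measurable_deriv _).aestronglyMeasurable.restrict
  have h1 : IntegrableOn (fun x : ℝ => |f x|) (Set.Ioi 0) := by
    simpa using hint1 1 le_rfl one_le_two
  have h2 : IntegrableOn (fun x : ℝ => |Dhalf f x|) (Set.Ioi 0) := by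
    simpa using hint2 1 le_rfl one_le_two
  have hfc_int : IntegrableOn (fun x : ℝ => f x * Real.cos (2 * Real.sqrt (x * s)))
      (Set.Ioi 0) := by
    apply MeasureTheory.Integrable.mono h1 (hf_m.mul hcos_m)
    apply Filter.Eventually.of_forall
    intro x
    simp only [Pi.mul_apply, Real.norm_eq_abs, abs_mul, abs_abs]
    exact mul_le_of_le_one_right (abs_nonneg _) (Real.abs_cos_le_one _)
  have hDc_int : IntegrableOn (fun x : ℝ => Dhalf f x * Real.cos (2 * Real.sqrt (x * s)))
      (Set.Ioi 0) := by
    apply MeasureTheory.Integrable.mono h2 (hD_m.mul hcos_m)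
    apply Filter.Eventually.of_forall
    intro x
    simp only [Pi.mul_apply, Real.norm_eq_abs, abs_mul, abs_abs]
    exact mul_le_of_le_one_right (abs_nonneg _) (Real.abs_cos_le_one _)
  have hsum_int : IntegrableOn (fun x : ℝ => Dhalf f x * Real.cos (2 * Real.sqrt (x * s))
      + s * (f x * Real.cos (2 * Real.sqrt (x * s)))) (Set.Ioi 0) :=
    hDc_int.add (hfc_int.const_mul s)
  -- the fundamental theorem of calculus
  have hI := ftc_Ioi_limits key hsum_int hF0 hFtop
  rw [sub_self] at hI
  rw [MeasureTheory.integral_add hDc_int (hfc_int.const_mul s),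
    MeasureTheory.integral_const_mul] at hI
  linarith
end

section
/- Let a ∈ (0, 1/4) and define ω : (0,∞) → ℝ by ω(x) = exp(−1/(a−x)) for 0 < x < a and ω(x) = 0 for x ≥ a. Then ω gives rise to a Pólya ensemble on Mat_ℂ(2,2) (i.e. with n = 2 and ν = 0); in particular, for all x₁, x₂ ∈ (0,∞): (x₂ − x₁) · ( ω(x₁)·(D₀ω)(x₂) − ω(x₂)·(D₀ω)(x₁) ) ≥ 0, where (D₀ω)(x) = d/dx( x·ω′(x) ). -/
/-- The differential operator `(D₀ f)(x) = d/dx( x · f′(x) )`, the case `ν = 0` of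
`(D_ν f)(x) = x^ν · d/dx( x^{1−ν} · f′(x) )`. -/
noncomputable def D0 (f : ℝ → ℝ) : ℝ → ℝ := fun x => deriv (fun t : ℝ => t * deriv f t) x

open Real Set Filter Topology

/-- The quadratic `q(u) = 2u² − 3(1+2a)u + 4a` is positive on `(0,a)` when `a < 1/4`. -/
private lemma aux_qpos {a u : ℝ} (hu : 0 < u) (hua : u < a) (ha4 : a < 1/4) :
    0 < 2*u^2 - 3*(1+2*a)*u + 4*a := by
  have ha0 : 0 < a := hu.trans hua
  nlinarith [mul_nonneg (by linarith : (0:ℝ) ≤ a - u) (by linarith : (0:ℝ) ≤ 3 + 4*a - 2*u),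
    mul_pos ha0 (by linarith : (0:ℝ) < 1 - 4*a)]

/-- The function `u ↦ (u² − (1+2a)u + a)/u⁴` is strictly decreasing on `(0,a)` when `a < 1/4`. -/
private lemma aux_strictAnti (a : ℝ) (ha0 : 0 < a) (ha4 : a < 1/4) :
    StrictAntiOn (fun u : ℝ => (u^2 - (1+2*a)*u + a) * (u^4)⁻¹) (Set.Ioo 0 a) := by
  apply strictAntiOn_of_deriv_neg (convex_Ioo 0 a)
  · apply ContinuousOn.mul (by fun_prop)
    exact ContinuousOn.inv₀ (by fun_prop) (fun u hu => pow_ne_zero _ (ne_of_gt hu.1))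
  · intro u hu
    rw [interior_Ioo] at hu
    obtain ⟨hu0, hua⟩ := hu
    have hne : u ≠ 0 := ne_of_gt hu0
    have h1 : HasDerivAt (fun u : ℝ => u^2 - (1+2*a)*u + a) (2*u - (1+2*a)) u := by
      have := (((hasDerivAt_pow 2 u).sub ((hasDerivAt_id u).const_mul (1+2*a))).add_const a)
      refine this.congr_deriv ?_
      push_cast
      ring
    have h2 : HasDerivAt (fun u : ℝ => (u^4)⁻¹) (-(4*u^3) / (u^4)^2) u := by
      have := (hasDerivAt_pow 4 u).inv (pow_ne_zero 4 hne)
      refine this.congr_deriv ?_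
      norm_num
    have h3 : HasDerivAt (fun u : ℝ => (u^2 - (1+2*a)*u + a) * (u^4)⁻¹) _ u := h1.mul h2
    rw [h3.deriv]
    have key : (2*u - (1+2*a)) * (u^4)⁻¹ + (u^2 - (1+2*a)*u + a) * (-(4*u^3) / (u^4)^2)
        = -((2*u^2 - 3*(1+2*a)*u + 4*a) * (u^5)⁻¹) := by
      field_simp
      ring
    rw [key]
    have hq := aux_qpos hu0 hua ha4
    have : 0 < (2*u^2 - 3*(1+2*a)*u + 4*a) * (u^5)⁻¹ :=
      mul_pos hq (inv_pos.2 (pow_pos hu0 5))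
    linarith

/-- A function vanishing on `[a,∞)` with continuous derivative has vanishing derivative there. -/
private lemma aux_deriv_zero {F : ℝ → ℝ} {a : ℝ}
    (hF : ∀ x, a ≤ x → F x = 0) (hc : Continuous (deriv F)) :
    ∀ x, a ≤ x → deriv F x = 0 := by
  have hgt : ∀ y : ℝ, a < y → deriv F y = 0 := by
    intro y hy
    have h : F =ᶠ[𝓝 y] fun _ => 0 := by
      filter_upwards [Ioi_mem_nhds hy] with t ht using hF t ht.le
    rw [h.deriv_eq]
    exact deriv_const y 0
  intro x hx
  rcases eq_or_lt_of_le hx with heq | h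
  · have h1 : Tendsto (deriv F) (𝓝[>] a) (𝓝 (deriv F a)) :=
      (hc.continuousAt).continuousWithinAt
    have h2 : Tendsto (deriv F) (𝓝[>] a) (𝓝 0) := by
      refine Tendsto.congr' ?_ tendsto_const_nhds
      filter_upwards [self_mem_nhdsWithin] with t ht
      exact (hgt t ht).symm
    rw [← heq]
    exact tendsto_nhds_unique h1 h2
  · exact hgt x h

/-- for `a ∈ (0, 1/4)`, the weight `ω(x) = exp(−1/(a−x))·𝟙_{(0,a)}(x)` gives rise
to a Pólya ensemble on `Mat_ℂ(2,2)` (`n = 2`, `ν = 0`), i.e. the induced squared-singular-value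
density `Δ₂(x)·det[(D₀^{b−1}ω)(x_c)]` is nonnegative. -/
theorem bump_weight_polyaEnsemble_two_by_two
    (a : ℝ) (ha0 : 0 < a) (ha4 : a < 1/4) (ω : ℝ → ℝ)
    (hω1 : ∀ x : ℝ, 0 < x → x < a → ω x = Real.exp (-(1 / (a - x))))
    (hω2 : ∀ x : ℝ, a ≤ x → ω x = 0) :
    ∀ x₁ x₂ : ℝ, 0 < x₁ → 0 < x₂ →
      0 ≤ (x₂ - x₁) * (ω x₁ * D0 ω x₂ - ω x₂ * D0 ω x₁) := by
  set f : ℝ → ℝ := fun x => expNegInvGlue (a - x) with hf_def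
  have hfc : ContDiff ℝ ((⊤:ℕ∞) : WithTop ℕ∞) f := expNegInvGlue.contDiff.comp (contDiff_const.sub contDiff_id)
  -- ω agrees with f on (0,∞)
  have hωf : ∀ x : ℝ, 0 < x → ω x = f x := by
    intro x hx
    rcases lt_or_ge x a with h | h
    · rw [hω1 x hx h, hf_def]
      simp only [expNegInvGlue, not_le.2 (by linarith : (0:ℝ) < a - x), if_false, one_div]
    · rw [hω2 x h, hf_def]
      exact (expNegInvGlue.zero_of_nonpos (by linarith)).symm
  have hωf' : ∀ x : ℝ, 0 < x → deriv ω x = deriv f x := by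
    intro x hx
    apply Filter.EventuallyEq.deriv_eq
    filter_upwards [Ioi_mem_nhds hx] with t ht
    exact hωf t ht
  have hD0 : ∀ x : ℝ, 0 < x → D0 ω x = D0 f x := by
    intro x hx
    simp only [D0]
    apply Filter.EventuallyEq.deriv_eq
    filter_upwards [Ioi_mem_nhds hx] with t ht
    rw [hωf' t ht]
  -- vanishing of f and D0 f on [a,∞)
  have hf0 : ∀ x : ℝ, a ≤ x → f x = 0 := fun x hx =>
    expNegInvGlue.zero_of_nonpos (by linarith)
  have hdfc : ContDiff ℝ ((⊤:ℕ∞) : WithTop ℕ∞) (deriv f) := (contDiff_infty_iff_deriv.mp hfc).2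
  have hdf0 : ∀ x : ℝ, a ≤ x → deriv f x = 0 := aux_deriv_zero hf0 hdfc.continuous
  have hgc : ContDiff ℝ ((⊤:ℕ∞) : WithTop ℕ∞) (fun t : ℝ => t * deriv f t) := contDiff_id.mul hdfc
  have hg0 : ∀ x : ℝ, a ≤ x → x * deriv f x = 0 := fun x hx => by rw [hdf0 x hx]; ring
  have hD0f0 : ∀ x : ℝ, a ≤ x → D0 f x = 0 := by
    intro x hx
    exact aux_deriv_zero hg0 ((contDiff_infty_iff_deriv.mp hgc).2.continuous) x hx
  -- explicit formulas on (-∞, a)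
  have hfE : ∀ x : ℝ, x < a → f x = Real.exp (-(a - x)⁻¹) := by
    intro x hx
    rw [hf_def]
    simp only [expNegInvGlue, not_le.2 (by linarith : (0:ℝ) < a - x), if_false]
  have hc2 : ∀ x : ℝ, x < a → HasDerivAt (fun t : ℝ => (a - t)⁻¹) (((a-x)⁻¹)^2) x := by
    intro x hx
    have hne : a - x ≠ 0 := ne_of_gt (by linarith)
    have h1 : HasDerivAt (fun t : ℝ => a - t) (-1) x := (hasDerivAt_id x).const_sub a
    refine (h1.inv hne).congr_deriv ?_
    field_simp
  have hasDf : ∀ x : ℝ, x < a →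
      HasDerivAt f (Real.exp (-(a-x)⁻¹) * -((a-x)⁻¹)^2) x := by
    intro x hx
    have h4 := ((hc2 x hx).neg).exp
    apply h4.congr_of_eventuallyEq
    filter_upwards [Iio_mem_nhds hx] with t ht
    exact hfE t ht
  have hderivf : ∀ x : ℝ, x < a → deriv f x = Real.exp (-(a-x)⁻¹) * -((a-x)⁻¹)^2 :=
    fun x hx => (hasDf x hx).deriv
  have hD0f_lt : ∀ x : ℝ, x < a → D0 f x
      = Real.exp (-(a-x)⁻¹) * (x * ((a-x)⁻¹)^4 - 2*x*((a-x)⁻¹)^3 - ((a-x)⁻¹)^2) := by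
    intro x hx
    have h2 := hc2 x hx
    have h4 : HasDerivAt (fun t : ℝ => Real.exp (-(a-t)⁻¹))
        (Real.exp (-(a-x)⁻¹) * -((a-x)⁻¹)^2) x := (h2.neg).exp
    have h5 := h2.pow 2
    have h6 := (h4.mul h5).neg
    have h7 := (hasDerivAt_id' (x := x)).mul h6
    have h8 : HasDerivAt (fun t : ℝ => t * deriv f t)
        (1 * -(Real.exp (-(a-x)⁻¹) * ((a-x)⁻¹)^2) +
          x * -(Real.exp (-(a-x)⁻¹) * -((a-x)⁻¹)^2 * ((a-x)⁻¹)^2 +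
            Real.exp (-(a-x)⁻¹) * ((2:ℕ) * ((a-x)⁻¹)^(2-1) * ((a-x)⁻¹)^2))) x := by
      apply h7.congr_of_eventuallyEq
      filter_upwards [Iio_mem_nhds hx] with t ht
      rw [hderivf t ht]
      simp only [Pi.mul_apply, Pi.neg_apply, Pi.pow_apply]
      ring
    simp only [D0]
    rw [h8.deriv]
    push_cast
    ring
  -- key inequality for x₁ ≤ x₂
  have key : ∀ x₁ x₂ : ℝ, 0 < x₁ → 0 < x₂ → x₁ ≤ x₂ →
      0 ≤ f x₁ * D0 f x₂ - f x₂ * D0 f x₁ := by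
    intro x₁ x₂ h₁ h₂ h₁₂
    rcases le_or_gt a x₂ with h | h
    · rw [hf0 x₂ h, hD0f0 x₂ h]
      simp
    · have hx₁a : x₁ < a := lt_of_le_of_lt h₁₂ h
      rcases eq_or_lt_of_le h₁₂ with rfl | hlt
      · simp
      · have hψ : ∀ x : ℝ, x < a → D0 f x
            = f x * (((a-x)^2 - (1+2*a)*(a-x) + a) * (((a-x))^4)⁻¹) := by
          intro x hxa
          rw [hD0f_lt x hxa, hfE x hxa]
          have hne : a - x ≠ 0 := ne_of_gt (by linarith)
          congr 1
          field_simp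
          ring
        rw [hψ x₁ hx₁a, hψ x₂ h]
        have hmono := aux_strictAnti a ha0 ha4
          (Set.mem_Ioo.2 ⟨by linarith, by linarith⟩)
          (Set.mem_Ioo.2 ⟨by linarith, by linarith⟩)
          (by linarith : a - x₂ < a - x₁)
        have hp₁ : 0 < f x₁ := by rw [hfE x₁ hx₁a]; exact Real.exp_pos _
        have hp₂ : 0 < f x₂ := by rw [hfE x₂ h]; exact Real.exp_pos _
        simp only at hmono
        nlinarith [mul_pos hp₁ hp₂]
  intro x₁ x₂ h₁ h₂
  rw [hωf x₁ h₁, hωf x₂ h₂, hD0 x₁ h₁, hD0 x₂ h₂]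
  rcases le_total x₁ x₂ with h | h
  · exact mul_nonneg (by linarith) (key x₁ x₂ h₁ h₂ h)
  · have h9 := mul_nonneg (by linarith : (0:ℝ) ≤ x₁ - x₂) (key x₂ x₁ h₂ h₁ h)
    nlinarith [h9]
end
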